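/- Let n and m be positive integers and let Φ : M_n → M_n be a mixed-unitary quantum channel having Choi rank equal to r, mixed-unitary rank equal to r, and a unique mixed-unitary decomposition. Then for every unitary channel Ψ : M_m → M_m, the direct sum channel Φ ⊕ Ψ : M_{n+m} → M_{n+m} has Choi rank r + 1 and mixed-unitary rank 2r. -/

import Mathlib

open scoped Kronecker ComplexOrder
open Matrix

/-- Square complex matrices indexed by `α`. -/
abbrev Mat (α : Type*) := Matrix α α ℂ

/-- The Choi matrix `J(Φ) = ∑_{j,k} Φ(E_{j,k}) ⊗ E_{j,k}` of a linear map between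
matrix spaces. -/
noncomputable def choiMatrix {α β : Type*} [Fintype α] [DecidableEq α]
    (Φ : Mat α →ₗ[ℂ] Mat β) : Matrix (β × α) (β × α) ℂ :=
  ∑ j : α, ∑ k : α, (Φ (Matrix.single j k 1)) ⊗ₖ (Matrix.single j k 1)

/-- The Choi rank of a linear map: the rank of its Choi matrix. -/
noncomputable def choiRank {α β : Type*} [Fintype α] [DecidableEq α] [Fintype β]
    (Φ : Mat α →ₗ[ℂ] Mat β) : ℕ :=
  (choiMatrix Φ).rank

/-- `A` is a Kraus representation of `Φ` (with the trace-preservation condition). -/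
def IsKrausRep {α β : Type*} [Fintype α] [DecidableEq α] [Fintype β] {r : ℕ}
    (Φ : Mat α →ₗ[ℂ] Mat β) (A : Fin r → Matrix β α ℂ) : Prop :=
  (∀ X, Φ X = ∑ k, A k * X * (A k)ᴴ) ∧ (∑ k, (A k)ᴴ * A k = 1)

/-- A quantum channel: a linear map admitting a Kraus representation
`Φ(X) = ∑ₖ Aₖ X Aₖ*` with `∑ₖ Aₖ* Aₖ = 1`. -/
def IsChannel {α β : Type*} [Fintype α] [DecidableEq α] [Fintype β]
    (Φ : Mat α →ₗ[ℂ] Mat β) : Prop :=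
  ∃ (r : ℕ) (A : Fin r → Matrix β α ℂ), IsKrausRep Φ A

/-- The dimension of the operator system `span{Aⱼᴴ Aₖ}` generated by a Kraus family. -/
noncomputable def krausOpSystemDim {α β : Type*} [Fintype α] [Fintype β] {r : ℕ}
    (A : Fin r → Matrix β α ℂ) : ℕ :=
  Module.finrank ℂ (Submodule.span ℂ {M : Mat α | ∃ j k, M = (A j)ᴴ * A k})

/-- A mixed-unitary decomposition of `Φ` with `N` terms: a probability vector `p`
and unitaries `U` with `Φ(X) = ∑ₖ pₖ Uₖ X Uₖ*`. -/
def IsMixedUnitaryDecomp {α : Type*} [Fintype α] [DecidableEq α] {N : ℕ}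
    (Φ : Mat α →ₗ[ℂ] Mat α) (p : Fin N → ℝ) (U : Fin N → Mat α) : Prop :=
  (∀ k, 0 ≤ p k) ∧ (∑ k, p k = 1) ∧ (∀ k, U k ∈ Matrix.unitaryGroup α ℂ) ∧
    (∀ X, Φ X = ∑ k, (p k : ℂ) • (U k * X * (U k)ᴴ))

/-- `Φ` is a mixed-unitary channel. -/
def IsMixedUnitary {α : Type*} [Fintype α] [DecidableEq α]
    (Φ : Mat α →ₗ[ℂ] Mat α) : Prop :=
  ∃ (N : ℕ) (p : Fin N → ℝ) (U : Fin N → Mat α), IsMixedUnitaryDecomp Φ p U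

/-- The mixed-unitary rank: the minimum number of unitary conjugations in a
mixed-unitary decomposition. -/
noncomputable def mixedUnitaryRank {α : Type*} [Fintype α] [DecidableEq α]
    (Φ : Mat α →ₗ[ℂ] Mat α) : ℕ :=
  sInf {N : ℕ | ∃ (p : Fin N → ℝ) (U : Fin N → Mat α), IsMixedUnitaryDecomp Φ p U}

/-- A mixed-unitary decomposition is the *unique* mixed-unitary decomposition of `Φ` if
every other mixed-unitary decomposition of `Φ` arises by partitioning its terms into
groups of phase-multiples of the `Uₖ` with matching total probabilities. -/
def IsUniqueMixedUnitaryDecomp {α : Type*} [Fintype α] [DecidableEq α] {N : ℕ}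
    (Φ : Mat α →ₗ[ℂ] Mat α) (p : Fin N → ℝ) (U : Fin N → Mat α) : Prop :=
  IsMixedUnitaryDecomp Φ p U ∧
    ∀ (t : ℕ) (q : Fin t → ℝ) (V : Fin t → Mat α), IsMixedUnitaryDecomp Φ q V →
      ∃ T : Fin t → Fin N,
        (∀ j, ∃ c : ℂ, ‖c‖ = 1 ∧ V j = c • U (T j)) ∧
        (∀ k, p k = ∑ j ∈ Finset.univ.filter (fun j => T j = k), q j)

/-- `Φ` possesses a unique mixed-unitary decomposition. -/
def HasUniqueMixedUnitaryDecomp {α : Type*} [Fintype α] [DecidableEq α]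
    (Φ : Mat α →ₗ[ℂ] Mat α) : Prop :=
  ∃ (N : ℕ) (p : Fin N → ℝ) (U : Fin N → Mat α), IsUniqueMixedUnitaryDecomp Φ p U

/-- `Ψ : M_α → M_N` is complementary to `Φ : M_α → M_α`: there is a Kraus representation
`Φ(X) = ∑ₖ Bₖ X Bₖ*` with `N` terms such that `Ψ(X)` has `(j,k)` entry `⟨Bₖ* Bⱼ, X⟩`. -/
def IsComplementary {α : Type*} [Fintype α] [DecidableEq α] {N : ℕ}
    (Φ : Mat α →ₗ[ℂ] Mat α) (Ψ : Mat α →ₗ[ℂ] Mat (Fin N)) : Prop :=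
  ∃ B : Fin N → Mat α, IsKrausRep Φ B ∧
    ∀ X, Ψ X = Matrix.of fun j k => ((((B k)ᴴ * B j)ᴴ) * X).trace

/-- A unitary channel: conjugation by a fixed unitary matrix. -/
def IsUnitaryChannel {α : Type*} [Fintype α] [DecidableEq α]
    (Ψ : Mat α →ₗ[ℂ] Mat α) : Prop :=
  ∃ U ∈ Matrix.unitaryGroup α ℂ, ∀ X, Ψ X = U * X * Uᴴ

/-- A correlation matrix: positive semidefinite with unit diagonal. -/
def IsCorrelation {α : Type*} [Fintype α] (C : Mat α) : Prop :=
  C.PosSemidef ∧ ∀ i, C i i = 1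

/-- A toroidal decomposition of `C` with `N` terms: `C = ∑ₖ pₖ uₖ uₖ*` where each `uₖ`
has all entries of modulus one. -/
def IsToroidalDecomp {α : Type*} [Fintype α] {N : ℕ}
    (C : Mat α) (p : Fin N → ℝ) (u : Fin N → α → ℂ) : Prop :=
  (∀ k, 0 ≤ p k) ∧ (∑ k, p k = 1) ∧ (∀ k i, ‖u k i‖ = 1) ∧
    C = ∑ k, (p k : ℂ) • Matrix.vecMulVec (u k) (star (u k))

/-- A correlation matrix is toroidal if it is a convex combination of rank-one
correlation matrices `u u*` with `u` having unimodular entries. -/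
def IsToroidal {α : Type*} [Fintype α] (C : Mat α) : Prop :=
  ∃ (N : ℕ) (p : Fin N → ℝ) (u : Fin N → α → ℂ), IsToroidalDecomp C p u

/-- The toroidal rank of a correlation matrix. -/
noncomputable def toroidalRank {α : Type*} [Fintype α] (C : Mat α) : ℕ :=
  sInf {N : ℕ | ∃ (p : Fin N → ℝ) (u : Fin N → α → ℂ), IsToroidalDecomp C p u}


/-- vectorization, as a linear map -/
def vecL (α β : Type*) : Matrix β α ℂ →ₗ[ℂ] (β × α → ℂ) where
  toFun A := fun p => A p.1 p.2
  map_add' A B := rfl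
  map_smul' c A := rfl

lemma vecL_inj {α β : Type*} : Function.Injective (vecL α β) := by
  intro A B h
  ext i j
  exact congrFun h (i, j)

lemma choi_eq_sum_outer {α β ι : Type*} [Fintype α] [DecidableEq α] [Fintype β] [Fintype ι]
    (Φ : Mat α →ₗ[ℂ] Mat β) (A : ι → Matrix β α ℂ)
    (h : ∀ X, Φ X = ∑ k, A k * X * (A k)ᴴ) :
    choiMatrix Φ = ∑ k, vecMulVec (vecL α β (A k)) (star (vecL α β (A k))) := by
  ext ⟨a, b⟩ ⟨c, d⟩
  simp only [choiMatrix, Matrix.sum_apply, kroneckerMap_apply, h, Matrix.single,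
    Matrix.mul_apply, vecMulVec_apply, Matrix.conjTranspose_apply, Matrix.of_apply,
    Pi.star_apply, vecL]
  simp only [LinearMap.coe_mk, AddHom.coe_mk]
  simp [ite_and, mul_ite, ite_mul, Finset.sum_ite_eq, Finset.sum_ite_eq']
  rfl

section outer
variable {η κ ι : Type*} [Fintype η] [Fintype κ] [Fintype ι]

lemma range_mulVecLin_self_mul_conjTranspose (B : Matrix η κ ℂ) :
    LinearMap.range (B * Bᴴ).mulVecLin = LinearMap.range B.mulVecLin := by
  have h1 : LinearMap.range (B * Bᴴ).mulVecLin ≤ LinearMap.range B.mulVecLin := by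
    rw [Matrix.mulVecLin_mul]; exact LinearMap.range_comp_le_range _ _
  have h2 : Module.finrank ℂ (LinearMap.range B.mulVecLin) ≤
      Module.finrank ℂ (LinearMap.range (B * Bᴴ).mulVecLin) :=
    (Matrix.rank_self_mul_conjTranspose B).ge
  exact Submodule.eq_of_le_of_finrank_le h1 h2

/-- matrix whose columns are the `v k` -/
def colMat (v : ι → η → ℂ) : Matrix η ι ℂ := Matrix.of fun i k => v k i

lemma sum_outer_eq_mul (v : ι → η → ℂ) :
    ∑ k, vecMulVec (v k) (star (v k)) = colMat v * (colMat v)ᴴ := by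
  ext i j
  simp [colMat, vecMulVec_apply, Matrix.mul_apply, Matrix.sum_apply, mul_comm]

lemma range_colMat_transpose (v : ι → η → ℂ) : Set.range (colMat v).col = Set.range v := rfl

lemma rank_sum_outer (v : ι → η → ℂ) :
    (∑ k, vecMulVec (v k) (star (v k))).rank
      = Module.finrank ℂ (Submodule.span ℂ (Set.range v)) := by
  rw [sum_outer_eq_mul, Matrix.rank_self_mul_conjTranspose,
    Matrix.rank_eq_finrank_span_cols, range_colMat_transpose]

lemma span_range_eq_of_sum_outer_eq {v : ι → η → ℂ} {w : κ → η → ℂ}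
    (h : ∑ k, vecMulVec (v k) (star (v k)) = ∑ j, vecMulVec (w j) (star (w j))) :
    Submodule.span ℂ (Set.range v) = Submodule.span ℂ (Set.range w) := by
  have hv : Submodule.span ℂ (Set.range v)
      = LinearMap.range (colMat v * (colMat v)ᴴ).mulVecLin := by
    rw [range_mulVecLin_self_mul_conjTranspose, Matrix.range_mulVecLin, range_colMat_transpose]
  have hw : Submodule.span ℂ (Set.range w)
      = LinearMap.range (colMat w * (colMat w)ᴴ).mulVecLin := by
    rw [range_mulVecLin_self_mul_conjTranspose, Matrix.range_mulVecLin, range_colMat_transpose]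
  rw [hv, hw, ← sum_outer_eq_mul, ← sum_outer_eq_mul, h]

end outer


section decomp
variable {α ι : Type*} [Fintype α] [DecidableEq α] [Fintype ι]

lemma sqrt_smul_conj_sandwich {p : ℝ} (hp : 0 ≤ p) (U X : Mat α) :
    ((Real.sqrt p : ℂ) • U) * X * ((Real.sqrt p : ℂ) • U)ᴴ = (p : ℂ) • (U * X * Uᴴ) := by
  rw [Matrix.conjTranspose_smul]
  rw [Matrix.smul_mul, Matrix.smul_mul, Matrix.mul_smul, smul_smul]
  congr 1
  rw [Complex.star_def, Complex.conj_ofReal, ← Complex.ofReal_mul, Real.mul_self_sqrt hp]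

lemma kraus_of_decomp {Φ : Mat α →ₗ[ℂ] Mat α} {p : ι → ℝ} {U : ι → Mat α}
    (hp : ∀ k, 0 ≤ p k) (h : ∀ X, Φ X = ∑ k, (p k : ℂ) • (U k * X * (U k)ᴴ)) :
    ∀ X, Φ X = ∑ k, ((Real.sqrt (p k) : ℂ) • U k) * X * ((Real.sqrt (p k) : ℂ) • U k)ᴴ := by
  intro X
  rw [h]
  exact Finset.sum_congr rfl fun k _ => (sqrt_smul_conj_sandwich (hp k) (U k) X).symm

end decomp

set_option maxHeartbeats 1000000 in
lemma key_S {α : Type*} [Fintype α] [DecidableEq α] {N r : ℕ}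
    {Φ : Mat α →ₗ[ℂ] Mat α} {p : Fin N → ℝ} {U : Fin N → Mat α}
    (huniq : IsUniqueMixedUnitaryDecomp Φ p U)
    (hchoi : choiRank Φ = r) (hrank : mixedUnitaryRank Φ = r) :
    (Finset.univ.filter (fun k => p k ≠ 0)).card = r ∧
      LinearIndependent ℂ (fun k : {k // p k ≠ 0} => U k) := by
  obtain ⟨⟨hp0, hp1, hpU, hPhi⟩, hU⟩ := huniq
  set S : Finset (Fin N) := Finset.univ.filter (fun k => p k ≠ 0) with hS
  -- Choi rank computation
  have hk := kraus_of_decomp hp0 hPhi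
  have hc : choiMatrix Φ
      = ∑ k, vecMulVec (vecL α α ((Real.sqrt (p k) : ℂ) • U k))
          (star (vecL α α ((Real.sqrt (p k) : ℂ) • U k))) :=
    choi_eq_sum_outer Φ _ hk
  have hrank1 : choiRank Φ = Module.finrank ℂ
      (Submodule.span ℂ (Set.range fun k => vecL α α ((Real.sqrt (p k) : ℂ) • U k))) := by
    rw [choiRank, hc, rank_sum_outer]
  have hspan : Submodule.span ℂ (Set.range fun k => vecL α α ((Real.sqrt (p k) : ℂ) • U k))
      = Submodule.span ℂ ((fun k => vecL α α (U k)) '' (S : Set (Fin N))) := by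
    apply le_antisymm
    · rw [Submodule.span_le]
      rintro _ ⟨k, rfl⟩
      dsimp only
      rw [LinearMap.map_smul]
      by_cases hpk : p k = 0
      · simp [hpk]
      · exact Submodule.smul_mem _ _ (Submodule.subset_span
          ⟨k, by simp [hS, hpk], rfl⟩)
    · rw [Submodule.span_le]
      rintro _ ⟨k, hk', rfl⟩
      dsimp only
      have hpk : p k ≠ 0 := by simpa [hS] using hk'
      have hsq : (Real.sqrt (p k) : ℂ) ≠ 0 := by
        simp only [ne_eq, Complex.ofReal_eq_zero]
        exact Real.sqrt_ne_zero'.2 (lt_of_le_of_ne (hp0 k) (Ne.symm hpk))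
      have : vecL α α (U k) = (Real.sqrt (p k) : ℂ)⁻¹ •
          vecL α α ((Real.sqrt (p k) : ℂ) • U k) := by
        rw [LinearMap.map_smul, smul_smul, inv_mul_cancel₀ hsq, one_smul]
      rw [this]
      exact Submodule.smul_mem _ _ (Submodule.subset_span ⟨k, rfl⟩)
  have hr_eq : r = Module.finrank ℂ
      (Submodule.span ℂ ((fun k => vecL α α (U k)) '' (S : Set (Fin N)))) := by
    rw [← hchoi, hrank1, hspan]
  -- S.card ≤ r via minimal decomposition
  have hne : {t : ℕ | ∃ (q : Fin t → ℝ) (V : Fin t → Mat α), IsMixedUnitaryDecomp Φ q V}.Nonempty :=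
    ⟨N, p, U, hp0, hp1, hpU, hPhi⟩
  have hmem : mixedUnitaryRank Φ ∈
      {t : ℕ | ∃ (q : Fin t → ℝ) (V : Fin t → Mat α), IsMixedUnitaryDecomp Φ q V} :=
    Nat.sInf_mem hne
  rw [hrank] at hmem
  obtain ⟨q, Vm, hq⟩ := hmem
  obtain ⟨T, -, hT⟩ := hU r q Vm hq
  have hcard_le : S.card ≤ r := by
    have hsub : S ⊆ Finset.univ.image T := by
      intro k hk'
      have hpk : p k ≠ 0 := by simpa [hS] using hk'
      have : (Finset.univ.filter (fun j => T j = k)).Nonempty := by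
        by_contra hemp
        rw [Finset.not_nonempty_iff_eq_empty] at hemp
        rw [hT k, hemp, Finset.sum_empty] at hpk
        exact hpk rfl
      obtain ⟨j, hj⟩ := this
      exact Finset.mem_image.2 ⟨j, Finset.mem_univ j, (Finset.mem_filter.1 hj).2⟩
    calc S.card ≤ (Finset.univ.image T).card := Finset.card_le_card hsub
      _ ≤ (Finset.univ : Finset (Fin r)).card := Finset.card_image_le
      _ = r := by simp
  -- r ≤ S.card
  have hrange : ((fun k => vecL α α (U k)) '' (S : Set (Fin N)))
      = Set.range (fun k : {k // p k ≠ 0} => vecL α α (U k)) := by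
    ext x
    simp only [Set.mem_image, Set.mem_range, hS, Finset.coe_filter, Set.mem_setOf_eq,
      Finset.mem_univ, true_and, Subtype.exists, exists_prop]
  have hr_le : r ≤ S.card := by
    have h1 : (Set.range (fun k : {k // p k ≠ 0} => vecL α α (U k))).finrank ℂ
        ≤ Fintype.card {k // p k ≠ 0} := finrank_range_le_card _
    rw [Fintype.card_subtype] at h1
    rw [hr_eq, hrange]
    exact le_trans h1 le_rfl
  have hcard : S.card = r := le_antisymm hcard_le hr_le
  refine ⟨hcard, ?_⟩
  -- linear independence
  have hLIvec : LinearIndependent ℂ (fun k : {k // p k ≠ 0} => vecL α α (U k)) := by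
    rw [linearIndependent_iff_card_eq_finrank_span]
    have hcardsub : Fintype.card {k // p k ≠ 0} = r := by
      rw [Fintype.card_subtype]; exact hcard
    rw [hcardsub]
    rw [Set.finrank, ← hrange, ← hr_eq]
  exact hLIvec.of_comp (vecL α α)


section blocks
variable {α β : Type*} [Fintype α] [DecidableEq α] [Fintype β] [DecidableEq β]

lemma sum_fromBlocks {ι : Type*} (s : Finset ι) (f : ι → Matrix α α ℂ) (g : ι → Matrix α β ℂ)
    (h : ι → Matrix β α ℂ) (l : ι → Matrix β β ℂ) :
    ∑ k ∈ s, fromBlocks (f k) (g k) (h k) (l k)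
      = fromBlocks (∑ k ∈ s, f k) (∑ k ∈ s, g k) (∑ k ∈ s, h k) (∑ k ∈ s, l k) := by
  ext (i | i) (j | j) <;> simp [Matrix.sum_apply]

lemma sandwich_blocks (A : Mat α) (B : Mat β) (Z : Mat (α ⊕ β)) :
    (fromBlocks A 0 0 B) * Z * (fromBlocks A 0 0 B)ᴴ
      = fromBlocks (A * Z.toBlocks₁₁ * Aᴴ) (A * Z.toBlocks₁₂ * Bᴴ)
          (B * Z.toBlocks₂₁ * Aᴴ) (B * Z.toBlocks₂₂ * Bᴴ) := by
  rw [← Matrix.fromBlocks_toBlocks Z, Matrix.fromBlocks_conjTranspose,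
    Matrix.fromBlocks_multiply, Matrix.fromBlocks_multiply]
  simp [Matrix.fromBlocks_toBlocks]

lemma fromBlocks_mem_unitary {A : Mat α} {B : Mat β}
    (hA : A ∈ Matrix.unitaryGroup α ℂ) (hB : B ∈ Matrix.unitaryGroup β ℂ) :
    fromBlocks A 0 0 B ∈ Matrix.unitaryGroup (α ⊕ β) ℂ := by
  rw [Matrix.mem_unitaryGroup_iff'] at hA hB ⊢
  rw [Matrix.star_eq_conjTranspose] at hA hB ⊢
  rw [Matrix.fromBlocks_conjTranspose, Matrix.fromBlocks_multiply]
  simp only [Matrix.mul_zero, Matrix.zero_mul, add_zero, zero_add,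
    Matrix.conjTranspose_zero, hA, hB]
  exact Matrix.fromBlocks_one

lemma fromBlocks_unitary_iff {A : Mat α} {B : Mat β} :
    fromBlocks A 0 0 B ∈ Matrix.unitaryGroup (α ⊕ β) ℂ ↔
      A ∈ Matrix.unitaryGroup α ℂ ∧ B ∈ Matrix.unitaryGroup β ℂ := by
  constructor
  · intro h
    rw [Matrix.mem_unitaryGroup_iff', Matrix.star_eq_conjTranspose,
      Matrix.fromBlocks_conjTranspose, Matrix.fromBlocks_multiply] at h
    simp only [Matrix.mul_zero, Matrix.zero_mul, add_zero, zero_add,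
      Matrix.conjTranspose_zero] at h
    rw [← Matrix.fromBlocks_one] at h
    constructor
    · rw [Matrix.mem_unitaryGroup_iff', Matrix.star_eq_conjTranspose]
      have h11 := congrArg Matrix.toBlocks₁₁ h
      rw [Matrix.toBlocks_fromBlocks₁₁, Matrix.toBlocks_fromBlocks₁₁] at h11
      exact h11
    · rw [Matrix.mem_unitaryGroup_iff', Matrix.star_eq_conjTranspose]
      have h22 := congrArg Matrix.toBlocks₂₂ h
      rw [Matrix.toBlocks_fromBlocks₂₂, Matrix.toBlocks_fromBlocks₂₂] at h22
      exact h22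
  · exact fun ⟨h1, h2⟩ => fromBlocks_mem_unitary h1 h2

lemma toBlocks₁₁_sum {ι : Type*} (s : Finset ι) (f : ι → Matrix (α ⊕ β) (α ⊕ β) ℂ) :
    (∑ k ∈ s, f k).toBlocks₁₁ = ∑ k ∈ s, (f k).toBlocks₁₁ := by
  ext i j; simp [Matrix.toBlocks₁₁, Matrix.sum_apply]

lemma toBlocks₁₂_sum {ι : Type*} (s : Finset ι) (f : ι → Matrix (α ⊕ β) (α ⊕ β) ℂ) :
    (∑ k ∈ s, f k).toBlocks₁₂ = ∑ k ∈ s, (f k).toBlocks₁₂ := by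
  ext i j; simp [Matrix.toBlocks₁₂, Matrix.sum_apply]

lemma toBlocks₁₁_smul (c : ℂ) (M : Matrix (α ⊕ β) (α ⊕ β) ℂ) :
    (c • M).toBlocks₁₁ = c • M.toBlocks₁₁ := rfl

lemma toBlocks₁₂_smul (c : ℂ) (M : Matrix (α ⊕ β) (α ⊕ β) ℂ) :
    (c • M).toBlocks₁₂ = c • M.toBlocks₁₂ := rfl

/-- embedding `A ↦ fromBlocks A 0 0 0` as a linear map -/
def embedL (α β : Type*) : Mat α →ₗ[ℂ] Mat (α ⊕ β) where
  toFun A := fromBlocks A 0 0 0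
  map_add' A B := by ext (i | i) (j | j) <;> simp [Matrix.fromBlocks]
  map_smul' c A := by ext (i | i) (j | j) <;> simp [Matrix.fromBlocks]

lemma embedL_inj : Function.Injective (embedL α β) := by
  intro A B h
  have := congrArg Matrix.toBlocks₁₁ h
  simpa [embedL, Matrix.toBlocks_fromBlocks₁₁] using this

lemma finrank_span_range_comp {V W : Type*} [AddCommGroup V] [Module ℂ V]
    [AddCommGroup W] [Module ℂ W] {ι : Type*} (f : V →ₗ[ℂ] W) (hf : Function.Injective f)
    (g : ι → V) :
    Module.finrank ℂ (Submodule.span ℂ (Set.range fun k => f (g k)))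
      = Module.finrank ℂ (Submodule.span ℂ (Set.range g)) := by
  have h1 : (Set.range fun k => f (g k)) = f '' Set.range g := by
    rw [← Set.range_comp]; rfl
  rw [h1, ← Submodule.map_span]
  exact (Submodule.equivMapOfInjective f hf _).finrank_eq.symm

end blocks


section xi
variable {n m : ℕ}

lemma neg_mem_unitary {V : Mat (Fin m)} (hV : V ∈ Matrix.unitaryGroup (Fin m) ℂ) :
    -V ∈ Matrix.unitaryGroup (Fin m) ℂ := by
  rw [Matrix.mem_unitaryGroup_iff'] at hV ⊢
  simpa using hV

lemma xi_mud {t : ℕ}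
    (Φ : Mat (Fin n) →ₗ[ℂ] Mat (Fin n)) (Ψ : Mat (Fin m) →ₗ[ℂ] Mat (Fin m))
    (Ξ : Mat (Fin n ⊕ Fin m) →ₗ[ℂ] Mat (Fin n ⊕ Fin m))
    (hΞ : ∀ Z, Ξ Z = Matrix.fromBlocks (Φ Z.toBlocks₁₁) 0 0 (Ψ Z.toBlocks₂₂))
    (q : Fin t → ℝ) (Vm : Fin t → Mat (Fin n)) (hq : IsMixedUnitaryDecomp Φ q Vm)
    (V : Mat (Fin m)) (hV : V ∈ Matrix.unitaryGroup (Fin m) ℂ)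
    (hΨ : ∀ X, Ψ X = V * X * Vᴴ) :
    ∃ (P : Fin (2 * t) → ℝ) (W : Fin (2 * t) → Mat (Fin n ⊕ Fin m)),
      IsMixedUnitaryDecomp Ξ P W := by
  obtain ⟨hq0, hq1, hqU, hqΦ⟩ := hq
  set W' : Fin 2 × Fin t → Mat (Fin n ⊕ Fin m) :=
    fun sk => fromBlocks (Vm sk.2) 0 0 (if sk.1 = 0 then V else -V) with hW'
  set P' : Fin 2 × Fin t → ℝ := fun sk => q sk.2 / 2 with hP'
  have key : ∀ Z, Ξ Z = ∑ sk : Fin 2 × Fin t, (P' sk : ℂ) • (W' sk * Z * (W' sk)ᴴ) := by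
    intro Z
    have hterm : ∀ k : Fin t,
        ((P' (0, k) : ℂ)) • (W' (0, k) * Z * (W' (0, k))ᴴ)
          + ((P' (1, k) : ℂ)) • (W' (1, k) * Z * (W' (1, k))ᴴ)
        = fromBlocks ((q k : ℂ) • (Vm k * Z.toBlocks₁₁ * (Vm k)ᴴ)) 0 0
            ((q k : ℂ) • (V * Z.toBlocks₂₂ * Vᴴ)) := by
      intro k
      have h0 : W' (0, k) = fromBlocks (Vm k) 0 0 V := by simp [hW']
      have h1 : W' (1, k) = fromBlocks (Vm k) 0 0 (-V) := by
        simp only [hW']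
        norm_num
      have hc : ((q k / 2 : ℝ) : ℂ) + ((q k / 2 : ℝ) : ℂ) = ((q k : ℝ) : ℂ) := by
        push_cast; ring
      simp only [hP']
      rw [h0, h1, sandwich_blocks, sandwich_blocks]
      have hneg1 : Vm k * Z.toBlocks₁₂ * (-V)ᴴ = -(Vm k * Z.toBlocks₁₂ * Vᴴ) := by
        rw [Matrix.conjTranspose_neg, Matrix.mul_neg]
      have hneg2 : (-V) * Z.toBlocks₂₁ * (Vm k)ᴴ = -(V * Z.toBlocks₂₁ * (Vm k)ᴴ) := by
        rw [Matrix.neg_mul, Matrix.neg_mul]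
      have hneg3 : (-V) * Z.toBlocks₂₂ * (-V)ᴴ = V * Z.toBlocks₂₂ * Vᴴ := by
        rw [Matrix.conjTranspose_neg, Matrix.neg_mul, Matrix.mul_neg, Matrix.neg_mul, neg_neg]
      rw [hneg1, hneg2, hneg3]
      have e1 : ((q k / 2 : ℝ) : ℂ) • (Vm k * Z.toBlocks₁₁ * (Vm k)ᴴ)
            + ((q k / 2 : ℝ) : ℂ) • (Vm k * Z.toBlocks₁₁ * (Vm k)ᴴ)
          = (q k : ℂ) • (Vm k * Z.toBlocks₁₁ * (Vm k)ᴴ) := by rw [← add_smul, hc]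
      have e2 : ((q k / 2 : ℝ) : ℂ) • (Vm k * Z.toBlocks₁₂ * Vᴴ)
            + ((q k / 2 : ℝ) : ℂ) • (-(Vm k * Z.toBlocks₁₂ * Vᴴ)) = 0 := by
        rw [smul_neg, add_neg_cancel]
      have e3 : ((q k / 2 : ℝ) : ℂ) • (V * Z.toBlocks₂₁ * (Vm k)ᴴ)
            + ((q k / 2 : ℝ) : ℂ) • (-(V * Z.toBlocks₂₁ * (Vm k)ᴴ)) = 0 := by
        rw [smul_neg, add_neg_cancel]
      have e4 : ((q k / 2 : ℝ) : ℂ) • (V * Z.toBlocks₂₂ * Vᴴ)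
            + ((q k / 2 : ℝ) : ℂ) • (V * Z.toBlocks₂₂ * Vᴴ)
          = (q k : ℂ) • (V * Z.toBlocks₂₂ * Vᴴ) := by rw [← add_smul, hc]
      rw [Matrix.fromBlocks_smul, Matrix.fromBlocks_smul, Matrix.fromBlocks_add, e1, e2, e3, e4]
    rw [Fintype.sum_prod_type, Fin.sum_univ_two, ← Finset.sum_add_distrib]
    rw [Finset.sum_congr rfl (fun k _ => hterm k), sum_fromBlocks, hΞ]
    have hsum1 : (∑ k, (q k : ℂ)) = 1 := by
      rw [← Complex.ofReal_sum, hq1, Complex.ofReal_one]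
    simp only [Finset.sum_const_zero]
    rw [hqΦ, hΨ, ← Finset.sum_smul, hsum1, one_smul]
  refine ⟨P' ∘ (finProdFinEquiv.symm), W' ∘ (finProdFinEquiv.symm), ?_, ?_, ?_, ?_⟩
  · intro k
    exact div_nonneg (hq0 _) (by norm_num)
  · simp only [Function.comp_apply]
    rw [Equiv.sum_comp finProdFinEquiv.symm P']
    simp only [hP']
    rw [Fintype.sum_prod_type, Fin.sum_univ_two, ← Finset.sum_add_distrib]
    have h2 : ∀ k : Fin t, q k / 2 + q k / 2 = q k := fun k => by ring
    rw [Finset.sum_congr rfl (fun k _ => h2 k), hq1]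
  · intro k
    simp only [Function.comp_apply, hW']
    by_cases h : (finProdFinEquiv.symm k).1 = 0
    · rw [if_pos h]; exact fromBlocks_mem_unitary (hqU _) hV
    · rw [if_neg h]; exact fromBlocks_mem_unitary (hqU _) (neg_mem_unitary hV)
  · intro X
    rw [key X]
    exact (Equiv.sum_comp finProdFinEquiv.symm
      (fun sk => (P' sk : ℂ) • (W' sk * X * (W' sk)ᴴ))).symm

end xi


section xichoi
variable {n m : ℕ}

lemma xi_choi {N : ℕ} (hm : 0 < m)
    (Φ : Mat (Fin n) →ₗ[ℂ] Mat (Fin n)) (Ψ : Mat (Fin m) →ₗ[ℂ] Mat (Fin m))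
    (Ξ : Mat (Fin n ⊕ Fin m) →ₗ[ℂ] Mat (Fin n ⊕ Fin m))
    (hΞ : ∀ Z, Ξ Z = Matrix.fromBlocks (Φ Z.toBlocks₁₁) 0 0 (Ψ Z.toBlocks₂₂))
    (p : Fin N → ℝ) (U : Fin N → Mat (Fin n)) (hp0 : ∀ k, 0 ≤ p k)
    (hΦ : ∀ X, Φ X = ∑ k, (p k : ℂ) • (U k * X * (U k)ᴴ))
    (V : Mat (Fin m)) (hV : V ∈ Matrix.unitaryGroup (Fin m) ℂ)
    (hΨ : ∀ X, Ψ X = V * X * Vᴴ) :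
    choiRank Ξ = choiRank Φ + 1 := by
  classical
  set g : Fin N → Mat (Fin n) := fun k => (Real.sqrt (p k) : ℂ) • U k with hg
  have hkΦ := kraus_of_decomp hp0 hΦ
  set F : Mat (Fin n) →ₗ[ℂ] (((Fin n ⊕ Fin m) × (Fin n ⊕ Fin m)) → ℂ) :=
    (vecL (Fin n ⊕ Fin m) (Fin n ⊕ Fin m)).comp (embedL (Fin n) (Fin m)) with hF
  have hFinj : Function.Injective F := vecL_inj.comp embedL_inj
  set w0 : ((Fin n ⊕ Fin m) × (Fin n ⊕ Fin m)) → ℂ :=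
    vecL _ _ (fromBlocks 0 0 0 V) with hw0
  set C : Fin N ⊕ Unit → Mat (Fin n ⊕ Fin m) :=
    Sum.elim (fun k => embedL (Fin n) (Fin m) (g k)) (fun _ => fromBlocks 0 0 0 V) with hC
  have hkΞ : ∀ Z, Ξ Z = ∑ i, C i * Z * (C i)ᴴ := by
    intro Z
    rw [Fintype.sum_sum_type]
    have h1 : ∀ k : Fin N, C (Sum.inl k) * Z * (C (Sum.inl k))ᴴ
        = fromBlocks (g k * Z.toBlocks₁₁ * (g k)ᴴ) 0 0 0 := by
      intro k
      show (fromBlocks (g k) 0 0 0) * Z * (fromBlocks (g k) 0 0 0)ᴴ = _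
      rw [sandwich_blocks]
      simp
    have h2 : C (Sum.inr ()) * Z * (C (Sum.inr ()))ᴴ
        = fromBlocks 0 0 0 (V * Z.toBlocks₂₂ * Vᴴ) := by
      show (fromBlocks 0 0 0 V) * Z * (fromBlocks 0 0 0 V)ᴴ = _
      rw [sandwich_blocks]
      simp
    rw [Finset.sum_congr rfl (fun k _ => h1 k)]
    rw [Finset.sum_congr rfl (fun (u : Unit) _ => h2)]
    rw [sum_fromBlocks]
    simp only [Finset.sum_const_zero, Finset.univ_unique, Finset.sum_singleton]
    rw [hΞ, Matrix.fromBlocks_add]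
    rw [hkΦ, hΨ]
    simp [hg, Matrix.conjTranspose_smul, Matrix.smul_mul, Matrix.mul_smul, smul_smul,
      Complex.conj_ofReal]
  have hchoi : choiRank Ξ = Module.finrank ℂ
      (Submodule.span ℂ (Set.range fun i => vecL _ _ (C i))) := by
    rw [choiRank, choi_eq_sum_outer Ξ C hkΞ, rank_sum_outer]
  have hsplit : (Set.range fun i => vecL _ _ (C i))
      = (Set.range fun k : Fin N => F (g k)) ∪ {w0} := by
    have : (fun i => vecL (Fin n ⊕ Fin m) (Fin n ⊕ Fin m) (C i))
        = Sum.elim (fun k : Fin N => F (g k)) (fun _ : Unit => w0) := by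
      funext i; cases i <;> rfl
    rw [this, Set.Sum.elim_range, Set.range_const]
  have hP : Module.finrank ℂ (Submodule.span ℂ (Set.range fun k : Fin N => F (g k)))
      = choiRank Φ := by
    rw [finrank_span_range_comp F hFinj g]
    rw [choiRank, choi_eq_sum_outer Φ _ hkΦ, rank_sum_outer]
    exact (finrank_span_range_comp (vecL (Fin n) (Fin n)) vecL_inj g).symm
  have hw0ne : w0 ≠ 0 := by
    intro h
    have : Matrix.fromBlocks (0 : Mat (Fin n)) 0 0 V = 0 := by
      apply vecL_inj
      rw [← hw0, h]
      rfl
    have hV0 : V = 0 := by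
      have := congrArg Matrix.toBlocks₂₂ this
      rw [Matrix.toBlocks_fromBlocks₂₂] at this; exact this.trans (by ext i j; rfl)
    rw [Matrix.mem_unitaryGroup_iff', hV0] at hV
    simp only [star_zero, Matrix.zero_mul] at hV
    have := congrFun (congrFun hV ⟨0, hm⟩) ⟨0, hm⟩
    simp [Matrix.one_apply_eq] at this
  have hQ : Module.finrank ℂ (Submodule.span ℂ ({w0} : Set _)) = 1 :=
    finrank_span_singleton hw0ne
  have hdisj : Submodule.span ℂ (Set.range fun k : Fin N => F (g k))
      ⊓ Submodule.span ℂ ({w0} : Set _) = ⊥ := by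
    rw [Submodule.eq_bot_iff]
    rintro x ⟨hx1, hx2⟩
    obtain ⟨c, hc⟩ := Submodule.mem_span_singleton.1 hx2
    have hx1' : x ∈ Submodule.map F (Submodule.span ℂ (Set.range g)) := by
      rw [Submodule.map_span]
      convert hx1 using 3
      rw [← Set.range_comp]
      rfl
    obtain ⟨y, -, hy⟩ := Submodule.mem_map.1 hx1'
    have hcw : c • w0 = vecL _ _ (fromBlocks 0 0 0 (c • V)) := by
      rw [hw0, ← LinearMap.map_smul]
      congr 1
      rw [Matrix.fromBlocks_smul]
      simp
    have heq : Matrix.fromBlocks y 0 0 0 = fromBlocks 0 0 0 (c • V) := by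
      apply vecL_inj
      show F y = _
      rw [hy, ← hc, hcw]
    have hcV : c • V = 0 := by
      have h22 := congrArg Matrix.toBlocks₂₂ heq
      rw [Matrix.toBlocks_fromBlocks₂₂, Matrix.toBlocks_fromBlocks₂₂] at h22
      exact h22.symm
    rw [← hc, hcw, hcV]
    simp only [Matrix.fromBlocks_zero]
    exact map_zero _
  rw [hchoi, hsplit, Submodule.span_union]
  have := Submodule.finrank_sup_add_finrank_inf_eq
    (Submodule.span ℂ (Set.range fun k : Fin N => F (g k)))
    (Submodule.span ℂ ({w0} : Set _))
  rw [hdisj, finrank_bot, add_zero, hP, hQ] at this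
  exact this

end xichoi


section lower
variable {n m : ℕ}

/-- The canonical Kraus family of the direct-sum channel. -/
noncomputable def xiKrausFam {N : ℕ} (p : Fin N → ℝ) (U : Fin N → Mat (Fin n))
    (V : Mat (Fin m)) : Fin N ⊕ Unit → Mat (Fin n ⊕ Fin m) :=
  Sum.elim (fun k => fromBlocks ((Real.sqrt (p k) : ℂ) • U k) 0 0 0)
    (fun _ => fromBlocks 0 0 0 V)

lemma xi_kraus {N : ℕ}
    (Φ : Mat (Fin n) →ₗ[ℂ] Mat (Fin n)) (Ψ : Mat (Fin m) →ₗ[ℂ] Mat (Fin m))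
    (Ξ : Mat (Fin n ⊕ Fin m) →ₗ[ℂ] Mat (Fin n ⊕ Fin m))
    (hΞ : ∀ Z, Ξ Z = Matrix.fromBlocks (Φ Z.toBlocks₁₁) 0 0 (Ψ Z.toBlocks₂₂))
    (p : Fin N → ℝ) (U : Fin N → Mat (Fin n)) (hp0 : ∀ k, 0 ≤ p k)
    (hΦ : ∀ X, Φ X = ∑ k, (p k : ℂ) • (U k * X * (U k)ᴴ))
    (V : Mat (Fin m)) (hΨ : ∀ X, Ψ X = V * X * Vᴴ) :
    ∀ Z, Ξ Z = ∑ i, xiKrausFam p U V i * Z * (xiKrausFam p U V i)ᴴ := by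
  intro Z
  set g : Fin N → Mat (Fin n) := fun k => (Real.sqrt (p k) : ℂ) • U k with hg
  have hkΦ := kraus_of_decomp hp0 hΦ
  rw [Fintype.sum_sum_type]
  have h1 : ∀ k : Fin N, xiKrausFam p U V (Sum.inl k) * Z * (xiKrausFam p U V (Sum.inl k))ᴴ
      = fromBlocks (g k * Z.toBlocks₁₁ * (g k)ᴴ) 0 0 0 := by
    intro k
    show (fromBlocks (g k) 0 0 0) * Z * (fromBlocks (g k) 0 0 0)ᴴ = _
    rw [sandwich_blocks]
    simp
  have h2 : xiKrausFam p U V (Sum.inr ()) * Z * (xiKrausFam p U V (Sum.inr ()))ᴴ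
      = fromBlocks 0 0 0 (V * Z.toBlocks₂₂ * Vᴴ) := by
    show (fromBlocks 0 0 0 V) * Z * (fromBlocks 0 0 0 V)ᴴ = _
    rw [sandwich_blocks]
    simp
  rw [Finset.sum_congr rfl (fun k _ => h1 k)]
  rw [Finset.sum_congr rfl (fun (u : Unit) _ => h2)]
  rw [sum_fromBlocks]
  simp only [Finset.sum_const_zero, Finset.univ_unique, Finset.sum_singleton]
  rw [hΞ, Matrix.fromBlocks_add]
  rw [hkΦ, hΨ]
  simp [hg, Matrix.conjTranspose_smul, Matrix.smul_mul, Matrix.mul_smul, smul_smul,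
    Complex.conj_ofReal]

lemma xi_block_form {N t : ℕ}
    (Φ : Mat (Fin n) →ₗ[ℂ] Mat (Fin n)) (Ψ : Mat (Fin m) →ₗ[ℂ] Mat (Fin m))
    (Ξ : Mat (Fin n ⊕ Fin m) →ₗ[ℂ] Mat (Fin n ⊕ Fin m))
    (hΞ : ∀ Z, Ξ Z = Matrix.fromBlocks (Φ Z.toBlocks₁₁) 0 0 (Ψ Z.toBlocks₂₂))
    (p : Fin N → ℝ) (U : Fin N → Mat (Fin n)) (hp0 : ∀ k, 0 ≤ p k)
    (hΦ : ∀ X, Φ X = ∑ k, (p k : ℂ) • (U k * X * (U k)ᴴ))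
    (V : Mat (Fin m)) (hΨ : ∀ X, Ψ X = V * X * Vᴴ)
    (q : Fin t → ℝ) (W : Fin t → Mat (Fin n ⊕ Fin m)) (hq0 : ∀ j, 0 ≤ q j)
    (hqΞ : ∀ Z, Ξ Z = ∑ j, (q j : ℂ) • (W j * Z * (W j)ᴴ)) :
    ∀ j, q j ≠ 0 → ∃ (A : Mat (Fin n)) (d : ℂ), W j = fromBlocks A 0 0 (d • V) := by
  intro j hj
  set C := xiKrausFam p U V with hCdef
  have hkΞ := xi_kraus Φ Ψ Ξ hΞ p U hp0 hΦ V hΨ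
  have hkΞ' := kraus_of_decomp hq0 hqΞ
  have hchoieq : (∑ i, vecMulVec (vecL _ _ ((Real.sqrt (q i) : ℂ) • W i))
        (star (vecL _ _ ((Real.sqrt (q i) : ℂ) • W i))))
      = ∑ i, vecMulVec (vecL _ _ (C i)) (star (vecL _ _ (C i))) := by
    rw [← choi_eq_sum_outer Ξ _ hkΞ', ← choi_eq_sum_outer Ξ C hkΞ]
  have hspan := span_range_eq_of_sum_outer_eq hchoieq
  have hmem1 : vecL _ _ ((Real.sqrt (q j) : ℂ) • W j)
      ∈ Submodule.span ℂ (Set.range fun i => vecL _ _ (C i)) := by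
    rw [← hspan]
    exact Submodule.subset_span ⟨j, rfl⟩
  have hsq : (Real.sqrt (q j) : ℂ) ≠ 0 := by
    simp only [ne_eq, Complex.ofReal_eq_zero]
    exact Real.sqrt_ne_zero'.2 (lt_of_le_of_ne (hq0 j) (Ne.symm hj))
  have hmem2 : vecL _ _ (W j) ∈ Submodule.span ℂ (Set.range fun i => vecL _ _ (C i)) := by
    have : vecL (Fin n ⊕ Fin m) (Fin n ⊕ Fin m) (W j)
        = (Real.sqrt (q j) : ℂ)⁻¹ • vecL _ _ ((Real.sqrt (q j) : ℂ) • W j) := by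
      rw [LinearMap.map_smul, smul_smul, inv_mul_cancel₀ hsq, one_smul]
    rw [this]
    exact Submodule.smul_mem _ _ hmem1
  have hmem3 : W j ∈ Submodule.span ℂ (Set.range C) := by
    have himg : (Set.range fun i => vecL (Fin n ⊕ Fin m) (Fin n ⊕ Fin m) (C i))
        = (vecL (Fin n ⊕ Fin m) (Fin n ⊕ Fin m)) '' (Set.range C) := by
      rw [← Set.range_comp]; rfl
    rw [himg, ← Submodule.map_span] at hmem2
    obtain ⟨y, hy, hyW⟩ := Submodule.mem_map.1 hmem2
    rwa [← vecL_inj hyW]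
  rw [Submodule.mem_span_range_iff_exists_fun] at hmem3
  obtain ⟨c, hc⟩ := hmem3
  refine ⟨∑ k : Fin N, c (Sum.inl k) • ((Real.sqrt (p k) : ℂ) • U k), c (Sum.inr ()), ?_⟩
  rw [← hc, Fintype.sum_sum_type]
  simp only [Finset.univ_unique, Finset.sum_singleton]
  have h1 : ∀ k : Fin N, c (Sum.inl k) • C (Sum.inl k)
      = fromBlocks (c (Sum.inl k) • ((Real.sqrt (p k) : ℂ) • U k)) 0 0 0 := by
    intro k
    show c (Sum.inl k) • fromBlocks ((Real.sqrt (p k) : ℂ) • U k) 0 0 0 = _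
    rw [Matrix.fromBlocks_smul]
    simp
  have h2 : c (Sum.inr ()) • C (Sum.inr ())
      = fromBlocks 0 0 0 (c (Sum.inr ()) • V) := by
    show c (Sum.inr ()) • fromBlocks 0 0 0 V = _
    rw [Matrix.fromBlocks_smul]
    simp
  rw [Finset.sum_congr rfl (fun k _ => h1 k), h2, sum_fromBlocks, Matrix.fromBlocks_add]
  simp

lemma block_unitary_parts (hm : 0 < m) {A : Mat (Fin n)} {d : ℂ} {V : Mat (Fin m)}
    (hV : V ∈ Matrix.unitaryGroup (Fin m) ℂ)
    (h : fromBlocks A 0 0 (d • V) ∈ Matrix.unitaryGroup (Fin n ⊕ Fin m) ℂ) :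
    A ∈ Matrix.unitaryGroup (Fin n) ℂ ∧ ‖d‖ = 1 := by
  obtain ⟨hA, hdV⟩ := fromBlocks_unitary_iff.1 h
  refine ⟨hA, ?_⟩
  rw [Matrix.mem_unitaryGroup_iff', Matrix.star_eq_conjTranspose] at hdV hV
  rw [Matrix.conjTranspose_smul, Matrix.smul_mul, Matrix.mul_smul, smul_smul, hV] at hdV
  have h0 : ((star d * d) • (1 : Mat (Fin m))) ⟨0, hm⟩ ⟨0, hm⟩
      = (1 : Mat (Fin m)) ⟨0, hm⟩ ⟨0, hm⟩ := by rw [hdV]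
  rw [Matrix.smul_apply, Matrix.one_apply_eq, smul_eq_mul, mul_one] at h0
  rw [Complex.star_def, mul_comm, Complex.mul_conj] at h0
  have hns : Complex.normSq d = 1 := by exact_mod_cast h0
  rw [Complex.norm_def, hns, Real.sqrt_one]

end lower


section lower2
variable {n m : ℕ}

set_option maxHeartbeats 1000000 in
lemma xi_lower {N r t : ℕ} (hm : 0 < m)
    (Φ : Mat (Fin n) →ₗ[ℂ] Mat (Fin n)) (Ψ : Mat (Fin m) →ₗ[ℂ] Mat (Fin m))
    (Ξ : Mat (Fin n ⊕ Fin m) →ₗ[ℂ] Mat (Fin n ⊕ Fin m))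
    (hΞ : ∀ Z, Ξ Z = Matrix.fromBlocks (Φ Z.toBlocks₁₁) 0 0 (Ψ Z.toBlocks₂₂))
    (p : Fin N → ℝ) (U : Fin N → Mat (Fin n))
    (huniq : IsUniqueMixedUnitaryDecomp Φ p U)
    (hchoi : choiRank Φ = r) (hrank : mixedUnitaryRank Φ = r)
    (V : Mat (Fin m)) (hV : V ∈ Matrix.unitaryGroup (Fin m) ℂ)
    (hΨ : ∀ X, Ψ X = V * X * Vᴴ)
    (q : Fin t → ℝ) (W : Fin t → Mat (Fin n ⊕ Fin m))
    (hqW : IsMixedUnitaryDecomp Ξ q W) :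
    2 * r ≤ t := by
  classical
  obtain ⟨hcard, hLI⟩ := key_S huniq hchoi hrank
  obtain ⟨⟨hp0, hp1, hpU, hΦ⟩, hU⟩ := huniq
  obtain ⟨hq0, hq1, hqU, hqΞ⟩ := hqW
  -- block form of the W j with nonzero weight
  have hbf := xi_block_form Φ Ψ Ξ hΞ p U hp0 hΦ V hΨ q W hq0 hqΞ
  -- choose A and d
  have hch : ∀ j, ∃ (A : Mat (Fin n)) (d : ℂ),
      (A ∈ Matrix.unitaryGroup (Fin n) ℂ ∧ ‖d‖ = 1) ∧
        (q j ≠ 0 → W j = fromBlocks A 0 0 (d • V)) := by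
    intro j
    by_cases h : q j = 0
    · refine ⟨1, 1, ⟨?_, by simp⟩, fun h' => absurd h h'⟩
      rw [Matrix.mem_unitaryGroup_iff]
      simp
    · obtain ⟨A, d, hW⟩ := hbf j h
      have hu : fromBlocks A 0 0 (d • V) ∈ Matrix.unitaryGroup (Fin n ⊕ Fin m) ℂ := by
        rw [← hW]; exact hqU j
      obtain ⟨hA, hd⟩ := block_unitary_parts hm hV hu
      exact ⟨A, d, ⟨hA, hd⟩, fun _ => hW⟩
  choose A d hAd hWj using hch
  -- the A j give a mixed-unitary decomposition of Φ
  have hAΦ : ∀ X, Φ X = ∑ j, (q j : ℂ) • (A j * X * (A j)ᴴ) := by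
    intro X
    have h1 : Ξ (fromBlocks X 0 0 0) = fromBlocks (Φ X) 0 0 0 := by
      rw [hΞ, Matrix.toBlocks_fromBlocks₁₁, Matrix.toBlocks_fromBlocks₂₂, map_zero]
    have h2 := hqΞ (fromBlocks X 0 0 0)
    have h3 := h1.symm.trans h2
    have h4 := congrArg Matrix.toBlocks₁₁ h3
    rw [Matrix.toBlocks_fromBlocks₁₁, toBlocks₁₁_sum] at h4
    rw [h4]
    refine Finset.sum_congr rfl fun j _ => ?_
    by_cases h : q j = 0
    · simp only [h, Complex.ofReal_zero, zero_smul]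
      rfl
    · rw [hWj j h, toBlocks₁₁_smul, sandwich_blocks, Matrix.toBlocks_fromBlocks₁₁,
        Matrix.toBlocks_fromBlocks₁₁]
  obtain ⟨T, hph, hpfib⟩ := hU t q A ⟨hq0, hq1, fun j => (hAd j).1, hAΦ⟩
  choose c hc1 hcA using hph
  -- coefficient function
  set f : Fin t → ℂ := fun j => (q j : ℂ) * (starRingEnd ℂ) (d j) * c j with hf
  -- the off-diagonal equation gives M = 0
  set M : Mat (Fin n) := ∑ j, f j • U (T j) with hM
  have hM0 : M = 0 := by
    have hMY : ∀ Y : Matrix (Fin n) (Fin m) ℂ, M * Y * Vᴴ = 0 := by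
      intro Y
      have h1 : Ξ (fromBlocks 0 Y 0 0) = 0 := by
        rw [hΞ, Matrix.toBlocks_fromBlocks₁₁, Matrix.toBlocks_fromBlocks₂₂, map_zero, map_zero]
        simp [Matrix.fromBlocks_zero]
      have h2 := (hqΞ (fromBlocks 0 Y 0 0)).symm.trans h1
      have h4 := congrArg Matrix.toBlocks₁₂ h2
      rw [toBlocks₁₂_sum] at h4
      have h5 : ∀ j, ((q j : ℂ) • (W j * fromBlocks 0 Y 0 0 * (W j)ᴴ)).toBlocks₁₂
          = f j • (U (T j) * Y * Vᴴ) := by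
        intro j
        by_cases h : q j = 0
        · have : (q j : ℂ) = 0 := by exact_mod_cast h
          rw [this, zero_smul, hf]
          dsimp only
          rw [show (q j : ℂ) = 0 from this, zero_mul, zero_mul, zero_smul]
          rfl
        · rw [hWj j h, toBlocks₁₂_smul, sandwich_blocks, Matrix.toBlocks_fromBlocks₁₂,
            Matrix.toBlocks_fromBlocks₁₂, hcA j]
          rw [Matrix.conjTranspose_smul, Matrix.mul_smul, Matrix.smul_mul, Matrix.smul_mul,
            smul_smul, smul_smul, hf]
          congr 1 <;> (rw [Complex.star_def]; ring)
      rw [Finset.sum_congr rfl (fun j _ => h5 j)] at h4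
      have h6 : ∑ j, f j • (U (T j) * Y * Vᴴ) = M * Y * Vᴴ := by
        rw [hM, Matrix.sum_mul, Matrix.sum_mul]
        refine Finset.sum_congr rfl fun j _ => ?_
        rw [Matrix.smul_mul, Matrix.smul_mul]
      rw [h6] at h4
      have h7 : (0 : Mat (Fin n ⊕ Fin m)).toBlocks₁₂ = 0 := rfl
      rw [h7] at h4
      exact h4
    have hVV : Vᴴ * V = 1 := by
      rw [Matrix.mem_unitaryGroup_iff', Matrix.star_eq_conjTranspose] at hV
      exact hV
    have hMY' : ∀ Y : Matrix (Fin n) (Fin m) ℂ, M * Y = 0 := by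
      intro Y
      have h9 : M * Y * Vᴴ * V = (0 : Matrix (Fin n) (Fin m) ℂ) * V := by rw [hMY Y]
      rw [Matrix.zero_mul, Matrix.mul_assoc (M * Y) Vᴴ V, hVV, Matrix.mul_one] at h9
      exact h9
    ext a b
    have h8 : (M * Matrix.single b (⟨0, hm⟩ : Fin m) (1 : ℂ)) a ⟨0, hm⟩
        = (0 : Matrix (Fin n) (Fin m) ℂ) a ⟨0, hm⟩ := by
      rw [hMY' _]
    rw [Matrix.mul_apply] at h8
    simp only [Matrix.single, Matrix.of_apply, ite_and, mul_ite, mul_one, mul_zero,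
      Finset.sum_ite_eq, Finset.sum_ite_eq', Matrix.zero_apply] at h8
    simpa using h8
  -- coefficient extraction via fiberwise sums and linear independence
  set F : Fin N → ℂ := fun k => ∑ j ∈ Finset.univ.filter (fun j => T j = k), f j with hF
  have hfib : ∑ k : Fin N, F k • U k = 0 := by
    rw [← hM0, hM]
    simp only [hF]
    rw [← Finset.sum_fiberwise Finset.univ T (fun j => f j • U (T j))]
    refine Finset.sum_congr rfl fun k _ => ?_
    rw [Finset.sum_smul]
    refine Finset.sum_congr rfl fun j hj => ?_
    rw [(Finset.mem_filter.1 hj).2]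
  have hFzero : ∀ k, p k = 0 → F k = 0 := by
    intro k hk
    simp only [hF]
    refine Finset.sum_eq_zero fun j hj => ?_
    have hqj : q j = 0 := by
      have := hpfib k
      rw [hk] at this
      have := (Finset.sum_eq_zero_iff_of_nonneg
        (fun j _ => hq0 j)).1 this.symm j hj
      exact this
    simp [hf, hqj]
  have hFS : ∀ k, p k ≠ 0 → F k = 0 := by
    have hsum : ∑ k ∈ Finset.univ.filter (fun k => p k ≠ 0), F k • U k = 0 := by
      rw [Finset.sum_filter_of_ne, hfib]
      intro k _ hne
      by_contra hp
      exact hne (by rw [hFzero k hp, zero_smul])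
    have hsub : ∑ k : {k // p k ≠ 0}, F k • U k = 0 := by
      rw [← hsum]
      exact (Finset.sum_subtype (Finset.univ.filter (fun k => p k ≠ 0))
        (fun x => by simp) (fun k => F k • U k)).symm
    intro k hk
    have := (Fintype.linearIndependent_iff.1 hLI) (fun k => F k) hsub ⟨k, hk⟩
    exact this
  -- counting
  set Fk : Fin N → Finset (Fin t) :=
    fun k => Finset.univ.filter (fun j => T j = k ∧ q j ≠ 0) with hFk
  have htwo : ∀ k, p k ≠ 0 → 2 ≤ (Fk k).card := by
    intro k hk
    by_contra hlt
    rw [not_le] at hlt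
    interval_cases h : (Fk k).card
    · -- card 0
      have hempty : Fk k = ∅ := Finset.card_eq_zero.1 h
      have : p k = 0 := by
        rw [hpfib k]
        refine Finset.sum_eq_zero fun j hj => ?_
        by_contra hq
        have : j ∈ Fk k := by
          rw [hFk]
          simp only [Finset.mem_filter, Finset.mem_univ, true_and]
          exact ⟨(Finset.mem_filter.1 hj).2, hq⟩
        rw [hempty] at this
        exact absurd this (Finset.notMem_empty j)
      exact hk this
    · -- card 1
      obtain ⟨j0, hj0⟩ := Finset.card_eq_one.1 h
      have hFkval : F k = f j0 := by
        simp only [hF]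
        rw [← Finset.sum_filter_of_ne (s := Finset.univ.filter (fun j => T j = k))
          (p := fun j => q j ≠ 0) (f := fun j => f j) ?_]
        · rw [Finset.filter_filter]
          rw [show Finset.univ.filter (fun j => T j = k ∧ q j ≠ 0) = Fk k from rfl, hj0,
            Finset.sum_singleton]
        · intro j _ hfj
          by_contra hq
          exact hfj (by simp [hf, hq])
      have hj0mem : j0 ∈ Fk k := by rw [hj0]; exact Finset.mem_singleton_self j0
      rw [hFk] at hj0mem
      simp only [Finset.mem_filter, Finset.mem_univ, true_and] at hj0mem
      have hfne : f j0 ≠ 0 := by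
        rw [hf]
        apply mul_ne_zero
        apply mul_ne_zero
        · exact_mod_cast hj0mem.2
        · intro hd0
          have := hAd j0
          rw [map_eq_zero] at hd0
          rw [hd0] at this
          simp at this
        · intro hc0
          have := hc1 j0
          rw [hc0] at this
          simp at this
      exact hfne (hFkval ▸ hFS k hk)
  -- disjointness and counting
  have hdisj : ∀ k1 ∈ Finset.univ.filter (fun k => p k ≠ 0),
      ∀ k2 ∈ Finset.univ.filter (fun k => p k ≠ 0), k1 ≠ k2 →
        Disjoint (Fk k1) (Fk k2) := by
    intro k1 _ k2 _ hne
    rw [Finset.disjoint_left]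
    intro j hj1 hj2
    rw [hFk] at hj1 hj2
    simp only [Finset.mem_filter, Finset.mem_univ, true_and] at hj1 hj2
    exact hne (hj1.1 ▸ hj2.1 ▸ rfl)
  calc 2 * r = ∑ k ∈ Finset.univ.filter (fun k => p k ≠ 0), 2 := by
        rw [Finset.sum_const, hcard, smul_eq_mul, mul_comm]
    _ ≤ ∑ k ∈ Finset.univ.filter (fun k => p k ≠ 0), (Fk k).card := by
        refine Finset.sum_le_sum fun k hk => ?_
        exact htwo k (by simpa using hk)
    _ = ((Finset.univ.filter (fun k => p k ≠ 0)).biUnion Fk).card :=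
        (Finset.card_biUnion hdisj).symm
    _ ≤ (Finset.univ : Finset (Fin t)).card := Finset.card_le_card (Finset.subset_univ _)
    _ = t := by simp
end lower2

/-- Theorem 5 of the paper. If `Φ : M_n → M_n` is mixed unitary with
Choi rank `r`, mixed-unitary rank `r`, and a unique mixed-unitary decomposition, then for
every unitary channel `Ψ : M_m → M_m` the direct sum channel `Φ ⊕ Ψ` has Choi rank
`r + 1` and mixed-unitary rank `2r`. -/
theorem stmt6 (n m : ℕ) (hn : 0 < n) (hm : 0 < m) (r : ℕ)
    (Φ : Mat (Fin n) →ₗ[ℂ] Mat (Fin n))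
    (hmu : IsMixedUnitary Φ)
    (hchoi : choiRank Φ = r) (hrank : mixedUnitaryRank Φ = r)
    (huniq : HasUniqueMixedUnitaryDecomp Φ)
    (Ψ : Mat (Fin m) →ₗ[ℂ] Mat (Fin m)) (hΨ : IsUnitaryChannel Ψ)
    (Ξ : Mat (Fin n ⊕ Fin m) →ₗ[ℂ] Mat (Fin n ⊕ Fin m))
    (hΞ : ∀ Z, Ξ Z = Matrix.fromBlocks (Φ Z.toBlocks₁₁) 0 0 (Ψ Z.toBlocks₂₂)) :
    IsMixedUnitary Ξ ∧ choiRank Ξ = r + 1 ∧ mixedUnitaryRank Ξ = 2 * r := by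
  obtain ⟨V, hV, hΨeq⟩ := hΨ
  obtain ⟨N, p, U, huq⟩ := huniq
  obtain ⟨⟨hp0, hp1, hpU, hΦd⟩, -⟩ := id huq
  -- a minimal decomposition of Φ with r terms
  have hne : {t : ℕ | ∃ (q : Fin t → ℝ) (Vm : Fin t → Mat (Fin n)),
      IsMixedUnitaryDecomp Φ q Vm}.Nonempty := ⟨N, p, U, hp0, hp1, hpU, hΦd⟩
  have hmem : mixedUnitaryRank Φ ∈ {t : ℕ | ∃ (q : Fin t → ℝ) (Vm : Fin t → Mat (Fin n)),
      IsMixedUnitaryDecomp Φ q Vm} := Nat.sInf_mem hne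
  rw [hrank] at hmem
  obtain ⟨q0, V0, hq0⟩ := hmem
  -- mixed-unitary decomposition of Ξ with 2r terms
  obtain ⟨P, W, hPW⟩ := xi_mud Φ Ψ Ξ hΞ q0 V0 hq0 V hV hΨeq
  refine ⟨⟨2 * r, P, W, hPW⟩, ?_, ?_⟩
  · rw [xi_choi hm Φ Ψ Ξ hΞ p U hp0 hΦd V hV hΨeq, hchoi]
  · refine le_antisymm ?_ ?_
    · exact Nat.sInf_le ⟨P, W, hPW⟩
    · refine le_csInf ⟨2 * r, P, W, hPW⟩ ?_
      rintro t ⟨q, W', hqW'⟩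
      exact xi_lower hm Φ Ψ Ξ hΞ p U huq hchoi hrank V hV hΨeq q W' hqW'
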